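/- Jacobi's formula for the Pfaffian: if A(t) is a skew-symmetric n×n matrix with polynomial entries over a commutative ℚ-algebra (n even), then d/dt pf(A(t)) = (1/2)·tr(A'(t) · Padj(A(t))), where derivatives are formal derivatives of polynomials. -/

import Mathlib

open Matrix Polynomial

namespace PaperPf

variable {R : Type*} [CommRing R]

/-- Position `2i`, the slot of the first element of the `i`-th pair. -/
def lo {m : ℕ} (i : Fin m) : Fin (2 * m) := ⟨2 * i.val, by have := i.isLt; omega⟩

/-- Position `2i+1`, the slot of the second element of the `i`-th pair. -/
def hi {m : ℕ} (i : Fin m) : Fin (2 * m) := ⟨2 * i.val + 1, by have := i.isLt; omega⟩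

/-- Permutations of `Fin (2m)` canonically encoding perfect matchings of
`{0,…,2m-1}`: the pairs are `{σ(2i), σ(2i+1)}`, each pair is listed with its
smaller element first, and pairs occur in increasing order of first elements.
The sign of the matching is the sign of this permutation. -/
def matchings (m : ℕ) : Finset (Equiv.Perm (Fin (2 * m))) :=
  Finset.univ.filter fun σ =>
    (∀ i : Fin m, σ (lo i) < σ (hi i)) ∧
    (∀ i j : Fin m, i < j → σ (lo i) < σ (lo j))

/-- The Pfaffian of a `2m × 2m` matrix, defined as the signed sum over all
perfect matchings of the products of the corresponding entries. -/
def pf {m : ℕ} (A : Matrix (Fin (2 * m)) (Fin (2 * m)) R) : R :=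
  ∑ σ ∈ matchings m,
    (Equiv.Perm.sign σ : ℤ) • ∏ i : Fin m, A (σ (lo i)) (σ (hi i))

end PaperPf

namespace PaperPf

variable {R : Type*} [CommRing R]

lemma card_compl_pair {m : ℕ} {i j : Fin (2 * (m + 1))} (h : ¬ i = j) :
    (({i, j}ᶜ : Finset (Fin (2 * (m + 1)))).card = 2 * m) := by
  rw [Finset.card_compl, Finset.card_insert_of_notMem (by simpa using h),
    Finset.card_singleton]
  simp only [Fintype.card_fin]
  omega

/-- The increasing enumeration of `{0,…,2(m+1)-1} \ {i,j}`. -/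
def delEmb {m : ℕ} (i j : Fin (2 * (m + 1))) (h : i ≠ j) :
    Fin (2 * m) → Fin (2 * (m + 1)) :=
  fun k => (({i, j}ᶜ : Finset (Fin (2 * (m + 1)))).orderIsoOfFin
    (card_compl_pair h) k : Fin (2 * (m + 1)))

/-- `A⟨i,j⟩`: the matrix obtained from `A` by deleting the `i`-th and `j`-th
rows and columns (junk value `0` if `i = j`). -/
def minor {m : ℕ} (A : Matrix (Fin (2 * (m + 1))) (Fin (2 * (m + 1))) R)
    (i j : Fin (2 * (m + 1))) : Matrix (Fin (2 * m)) (Fin (2 * m)) R :=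
  if h : i = j then 0
  else A.submatrix (delEmb i j h) (delEmb i j h)

/-- The Pfaff-adjugate matrix of `A`. -/
def Padj {m : ℕ} (A : Matrix (Fin (2 * (m + 1))) (Fin (2 * (m + 1))) R) :
    Matrix (Fin (2 * (m + 1))) (Fin (2 * (m + 1))) R :=
  fun i j =>
    if i = j then 0
    else if i < j then (-1 : R) ^ (i.val + j.val) * pf (minor A i j)
    else (-1 : R) ^ (i.val + j.val + 1) * pf (minor A i j)

end PaperPf

open PaperPf

namespace PaperPf

variable {R : Type*} [CommRing R] {m : ℕ}

/-! ### explicit enumeration of the complement of a pair -/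

variable {m : ℕ}

/-- explicit increasing enumeration of the complement of `{i,j}`, `i < j`. -/
def emb (i j : Fin (2 * (m + 1))) : Fin (2 * m) → Fin (2 * (m + 1)) :=
  fun x => ⟨if x.val < i.val then x.val else if x.val + 1 < j.val then x.val + 1
      else x.val + 2, by have := x.isLt; split <;> [omega; (split <;> omega)]⟩

lemma emb_strictMono {i j : Fin (2 * (m + 1))} (hij : i < j) : StrictMono (emb i j) := by
  intro x y hxy
  have hxy' : x.val < y.val := hxy
  simp only [emb, Fin.mk_lt_mk]
  split_ifs <;> omega

lemma emb_ne_left {i j : Fin (2 * (m + 1))} (hij : i < j) (x : Fin (2 * m)) :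
    emb i j x ≠ i := by
  have hij' : i.val < j.val := hij
  simp only [emb, Fin.ne_iff_vne]
  split
  · omega
  · split <;> omega

lemma emb_ne_right {i j : Fin (2 * (m + 1))} (hij : i < j) (x : Fin (2 * m)) :
    emb i j x ≠ j := by
  have hij' : i.val < j.val := hij
  simp only [emb, Fin.ne_iff_vne]
  split
  · omega
  · split <;> omega

lemma emb_mem_compl {i j : Fin (2 * (m + 1))} (hij : i < j) (x : Fin (2 * m)) :
    emb i j x ∈ ({i, j}ᶜ : Finset (Fin (2 * (m + 1)))) := by
  simp [Finset.mem_compl, emb_ne_left hij, emb_ne_right hij]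

lemma delEmb_eq_emb {i j : Fin (2 * (m + 1))} (hij : i < j) (h : i ≠ j) :
    delEmb i j h = emb i j := by
  funext x
  have := Finset.orderEmbOfFin_unique (card_compl_pair (by exact h))
    (f := emb i j) (fun y => emb_mem_compl hij y) (emb_strictMono hij)
  have h2 : delEmb i j h x = ({i, j}ᶜ : Finset (Fin (2 * (m + 1)))).orderEmbOfFin
      (card_compl_pair (by exact h)) x := by
    rw [delEmb, ← Finset.coe_orderIsoOfFin_apply]
  rw [h2, this]

lemma minor_eq_submatrix {i j : Fin (2 * (m + 1))} (hij : i < j)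
    (A : Matrix (Fin (2 * (m + 1))) (Fin (2 * (m + 1))) R) :
    minor A i j = A.submatrix (emb i j) (emb i j) := by
  rw [minor, dif_neg (by exact fun h => absurd h (Fin.ne_of_lt hij)),
    delEmb_eq_emb hij]


/-! ### the equiv `Fin 2 ⊕ Fin 2m ≃ Fin (2(m+1))` attached to a pair -/

noncomputable def gE (i j : Fin (2 * (m + 1))) (hij : i < j) : (Fin 2 ⊕ Fin (2 * m)) ≃ Fin (2 * (m + 1)) :=
  Equiv.ofBijective (Sum.elim (fun a => if a.val = 0 then i else j) (emb i j)) (by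
    rw [Fintype.bijective_iff_injective_and_card]
    constructor
    · intro a b hab
      have hne : i ≠ j := Fin.ne_of_lt hij
      rcases a with a | a <;> rcases b with b | b <;>
        simp only [Sum.elim_inl, Sum.elim_inr] at hab
      · rcases a with ⟨av, ha⟩; rcases b with ⟨bv, hb⟩
        interval_cases av <;> interval_cases bv <;> simp_all
      · split at hab
        · exact absurd hab.symm (emb_ne_left hij b)
        · exact absurd hab.symm (emb_ne_right hij b)
      · split at hab
        · exact absurd hab (emb_ne_left hij a)
        · exact absurd hab (emb_ne_right hij a)
      · exact congrArg Sum.inr ((emb_strictMono hij).injective hab)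
    · simp; omega)

lemma gE_inl0 {i j : Fin (2 * (m + 1))} (hij : i < j) : gE i j hij (Sum.inl 0) = i := rfl

lemma gE_inl1 {i j : Fin (2 * (m + 1))} (hij : i < j) : gE i j hij (Sum.inl 1) = j := rfl

lemma gE_inr {i j : Fin (2 * (m + 1))} (hij : i < j) (x : Fin (2 * m)) :
    gE i j hij (Sum.inr x) = emb i j x := rfl

/-! ### skipping map on pair indices -/

def skip (k : Fin (m + 1)) (l : Fin m) : Fin (m + 1) :=
  ⟨if l.val < k.val then l.val else l.val + 1, by have := l.isLt; split <;> omega⟩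

lemma lo_lt_hi (k : Fin (m + 1)) : lo k < hi k := by
  simp [lo, hi, Fin.lt_iff_val_lt_val]

lemma emb_pair_lo (k : Fin (m + 1)) (l : Fin m) :
    emb (lo k) (hi k) (lo l) = lo (skip k l) := by
  apply Fin.ext
  simp [emb, lo, hi, skip]
  split_ifs <;> omega

lemma emb_pair_hi (k : Fin (m + 1)) (l : Fin m) :
    emb (lo k) (hi k) (hi l) = hi (skip k l) := by
  apply Fin.ext
  simp [emb, lo, hi, skip]
  split_ifs <;> omega

lemma skip_ne (k : Fin (m + 1)) (l : Fin m) : skip k l ≠ k := by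
  simp only [Fin.ne_iff_vne, skip]
  split <;> omega

lemma skip_lt_iff (k : Fin (m + 1)) (l : Fin m) : skip k l < k ↔ l.val < k.val := by
  simp only [Fin.lt_iff_val_lt_val, skip]
  split <;> omega

lemma skip_lt_skip (k : Fin (m + 1)) (l l' : Fin m) : skip k l < skip k l' ↔ l < l' := by
  simp only [Fin.lt_iff_val_lt_val, skip]
  split_ifs <;> omega

lemma exists_skip {k p : Fin (m + 1)} (h : p ≠ k) : ∃ l, skip k l = p := by
  have hp := p.isLt
  have hk := k.isLt
  have hne : p.val ≠ k.val := Fin.val_ne_of_ne h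
  by_cases hc : p.val < k.val
  · exact ⟨⟨p.val, by omega⟩, by apply Fin.ext; simp [skip]; omega⟩
  · refine ⟨⟨p.val - 1, by omega⟩, by apply Fin.ext; simp only [skip]; split <;> omega⟩

/-! ### cycleRange lemmas for general `n` -/

lemma cr_gt {n : ℕ} {i j : Fin n} (h : i < j) : Fin.cycleRange i j = j := by
  cases n with
  | zero => exact Fin.elim0 i
  | succ n => exact Fin.cycleRange_of_gt h

lemma cr_self {n : ℕ} (i : Fin n) : (Fin.cycleRange i i).val = 0 := by
  cases n with
  | zero => exact i.elim0
  | succ n => rw [Fin.cycleRange_self]; rfl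

lemma cr_lt {n : ℕ} {i j : Fin n} (h : j < i) : (Fin.cycleRange i j).val = j.val + 1 := by
  cases n with
  | zero => exact Fin.elim0 i
  | succ n => exact Fin.coe_cycleRange_of_lt h

/-! ### the sign computation -/

set_option maxHeartbeats 1000000 in
lemma sign_W {i j : Fin (2 * (m + 1))} (hij : i < j) :
    Equiv.Perm.sign ((gE (lo 0) (hi 0) (lo_lt_hi 0)).symm.trans (gE i j hij)) =
      (-1 : ℤˣ) ^ (i.val + j.val + 1) := by
  have hjlt := j.isLt
  have hijv : i.val < j.val := hij
  set W : Equiv.Perm (Fin (2 * (m + 1))) :=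
    (gE (lo 0) (hi 0) (lo_lt_hi 0)).symm.trans (gE i j hij) with hW
  have hi1 : i.val + 1 < 2 * (m + 1) := by omega
  set c2 : Equiv.Perm (Fin (2 * (m + 1))) := Fin.cycleRange ⟨i.val + 1, hi1⟩ with hc2
  set c1 : Equiv.Perm (Fin (2 * (m + 1))) := Fin.cycleRange j with hc1
  have key : (c2 * c1) * W = 1 := by
    apply Equiv.ext
    intro y
    obtain ⟨z, rfl⟩ : ∃ z, gE (lo 0) (hi 0) (lo_lt_hi 0) z = y :=
      ⟨_, (gE (lo 0) (hi 0) (lo_lt_hi 0)).apply_symm_apply y⟩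
    have hWz : ∀ z', W (gE (lo 0) (hi 0) (lo_lt_hi 0) z') = gE i j hij z' := by
      intro z'; simp [hW, Equiv.trans_apply]
    rw [Equiv.Perm.mul_apply, Equiv.Perm.mul_apply, Equiv.Perm.one_apply, hWz]
    rcases z with a | x
    · rcases a with ⟨av, ha⟩
      interval_cases av
      · -- z = inl 0 : W y = i, y = lo 0 = 0
        have e0 : (gE i j hij) (Sum.inl ⟨0, ha⟩) = i := rfl
        rw [e0]
        have h1 : c1 i = ⟨i.val + 1, hi1⟩ := by
          apply Fin.ext
          rw [hc1, cr_lt hij]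
        rw [h1, hc2]
        apply Fin.ext
        rw [cr_self]
        show 0 = (gE (lo 0) (hi 0) (lo_lt_hi 0) (Sum.inl ⟨0, ha⟩)).val
        simp [gE, lo, emb]
      · -- z = inl 1 : W y = j, y = hi 0 = 1
        have e1 : (gE i j hij) (Sum.inl ⟨1, ha⟩) = j := rfl
        rw [e1]
        have h1 : c1 j = ⟨0, by omega⟩ := by
          apply Fin.ext; rw [hc1, cr_self]
        rw [h1, hc2]
        have h2 : (⟨0, by omega⟩ : Fin (2 * (m + 1))) < ⟨i.val + 1, hi1⟩ := by
          simp [Fin.lt_iff_val_lt_val]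
        apply Fin.ext
        rw [cr_lt h2]
        show 0 + 1 = (gE (lo 0) (hi 0) (lo_lt_hi 0) (Sum.inl ⟨1, ha⟩)).val
        simp [gE, lo, hi, emb]
        exact (Nat.mod_eq_of_lt (by omega)).symm
    · -- z = inr x
      rw [gE_inr]
      have hxlt := x.isLt
      have hb0 : x.val < 2 * (m + 1) := by omega
      have hb1 : x.val + 1 < 2 * (m + 1) := by omega
      have hb2 : x.val + 2 < 2 * (m + 1) := by omega
      have hyval : (gE (lo 0) (hi 0) (lo_lt_hi 0) (Sum.inr x)).val = x.val + 2 := by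
        rw [gE_inr]
        simp [emb, lo, hi]
        exact (Nat.mod_le _ _).trans (by omega)
      apply Fin.ext
      rw [hyval]
      by_cases h1 : x.val < i.val
      · -- emb i j x = x
        have hv : emb i j x = ⟨x.val, hb0⟩ := by
          apply Fin.ext; simp [emb, h1]
        have ha1 : (⟨x.val, hb0⟩ : Fin (2 * (m + 1))) < j := by
          simp only [Fin.lt_iff_val_lt_val]; omega
        have hc1v : c1 ⟨x.val, hb0⟩ = ⟨x.val + 1, hb1⟩ := by
          apply Fin.ext
          rw [hc1, cr_lt ha1]
        have ha2 : (⟨x.val + 1, hb1⟩ : Fin (2 * (m + 1))) < ⟨i.val + 1, hi1⟩ := by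
          simp only [Fin.lt_iff_val_lt_val]; omega
        have hc2v : c2 ⟨x.val + 1, hb1⟩ = ⟨x.val + 2, hb2⟩ := by
          apply Fin.ext
          rw [hc2, cr_lt ha2]
        rw [hv, hc1v, hc2v]
      · by_cases h2 : x.val + 1 < j.val
        · -- emb i j x = x + 1
          have hv : emb i j x = ⟨x.val + 1, hb1⟩ := by
            apply Fin.ext; simp [emb, h1, h2]
          have ha1 : (⟨x.val + 1, hb1⟩ : Fin (2 * (m + 1))) < j := by
            simp only [Fin.lt_iff_val_lt_val]; omega
          have hc1v : c1 ⟨x.val + 1, hb1⟩ = ⟨x.val + 2, hb2⟩ := by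
            apply Fin.ext
            rw [hc1, cr_lt ha1]
          have ha2 : (⟨i.val + 1, hi1⟩ : Fin (2 * (m + 1))) < ⟨x.val + 2, hb2⟩ := by
            simp only [Fin.lt_iff_val_lt_val]; omega
          have hc2v : c2 ⟨x.val + 2, hb2⟩ = ⟨x.val + 2, hb2⟩ := by
            rw [hc2, cr_gt ha2]
          rw [hv, hc1v, hc2v]
        · -- emb i j x = x + 2
          have hv : emb i j x = ⟨x.val + 2, hb2⟩ := by
            apply Fin.ext; simp [emb, h1, h2]
          have ha1 : j < (⟨x.val + 2, hb2⟩ : Fin (2 * (m + 1))) := by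
            simp only [Fin.lt_iff_val_lt_val]; omega
          have hc1v : c1 ⟨x.val + 2, hb2⟩ = ⟨x.val + 2, hb2⟩ := by
            rw [hc1, cr_gt ha1]
          have ha2 : (⟨i.val + 1, hi1⟩ : Fin (2 * (m + 1))) < ⟨x.val + 2, hb2⟩ := by
            simp only [Fin.lt_iff_val_lt_val]; omega
          have hc2v : c2 ⟨x.val + 2, hb2⟩ = ⟨x.val + 2, hb2⟩ := by
            rw [hc2, cr_gt ha2]
          rw [hv, hc1v, hc2v]
  have hWeq : W = (c2 * c1)⁻¹ := eq_inv_of_mul_eq_one_right key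
  rw [hWeq, map_inv, _root_.map_mul]
  rw [hc2, hc1, Fin.sign_cycleRange, Fin.sign_cycleRange]
  rw [← pow_add]
  have he : i.val + 1 + j.val = i.val + j.val + 1 := by omega
  rw [he, ← inv_pow]
  norm_num

lemma sign_W_pair (k : Fin (m + 1)) :
    Equiv.Perm.sign ((gE (lo 0) (hi 0) (lo_lt_hi 0)).symm.trans
      (gE (lo k) (hi k) (lo_lt_hi k))) = 1 := by
  rw [sign_W (lo_lt_hi k)]
  have : (lo k).val + (hi k).val + 1 = 2 * (2 * k.val + 1) := by simp [lo, hi]; omega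
  rw [this, pow_mul]
  norm_num


/-! ### the correspondence between matchings -/

lemma mem_matchings_iff {M : ℕ} {σ : Equiv.Perm (Fin (2 * M))} :
    σ ∈ matchings M ↔
      (∀ i : Fin M, σ (lo i) < σ (hi i)) ∧
      (∀ i j : Fin M, i < j → σ (lo i) < σ (lo j)) := by
  simp [matchings]

/-- rank of `i` among the first elements. -/
def kOf (i j : Fin (2 * (m + 1))) (τ : Equiv.Perm (Fin (2 * m))) : Fin (m + 1) :=
  ⟨(Finset.univ.filter fun l : Fin m => emb i j (τ (lo l)) < i).card, by
    have := Finset.card_filter_le (Finset.univ : Finset (Fin m))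
      (fun l : Fin m => emb i j (τ (lo l)) < i)
    simp only [Finset.card_univ, Fintype.card_fin] at this
    omega⟩

/-- The matching of `Fin (2(m+1))` obtained from a matching `τ` of the complement
of `{i,j}` by adding the pair `{i,j}` in slot `k`. -/
noncomputable def PhiK (i j : Fin (2 * (m + 1))) (hij : i < j) (k : Fin (m + 1))
    (τ : Equiv.Perm (Fin (2 * m))) : Equiv.Perm (Fin (2 * (m + 1))) :=
  (gE (lo k) (hi k) (lo_lt_hi k)).symm.trans
    ((Equiv.sumCongr (Equiv.refl (Fin 2)) τ).trans (gE i j hij))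

noncomputable def Phi (i j : Fin (2 * (m + 1))) (hij : i < j)
    (τ : Equiv.Perm (Fin (2 * m))) : Equiv.Perm (Fin (2 * (m + 1))) :=
  PhiK i j hij (kOf i j τ) τ

lemma PhiK_lo {i j : Fin (2 * (m + 1))} (hij : i < j) (k : Fin (m + 1))
    (τ : Equiv.Perm (Fin (2 * m))) : PhiK i j hij k τ (lo k) = i := by
  have h0 : (gE (lo k) (hi k) (lo_lt_hi k)).symm (lo k) = Sum.inl 0 := by
    rw [Equiv.symm_apply_eq]; rfl
  simp [PhiK, Equiv.trans_apply, h0, gE_inl0]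

lemma PhiK_hi {i j : Fin (2 * (m + 1))} (hij : i < j) (k : Fin (m + 1))
    (τ : Equiv.Perm (Fin (2 * m))) : PhiK i j hij k τ (hi k) = j := by
  have h0 : (gE (lo k) (hi k) (lo_lt_hi k)).symm (hi k) = Sum.inl 1 := by
    rw [Equiv.symm_apply_eq]; rfl
  simp [PhiK, Equiv.trans_apply, h0, gE_inl1]

lemma PhiK_skip_lo {i j : Fin (2 * (m + 1))} (hij : i < j) (k : Fin (m + 1))
    (τ : Equiv.Perm (Fin (2 * m))) (l : Fin m) :
    PhiK i j hij k τ (lo (skip k l)) = emb i j (τ (lo l)) := by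
  have h0 : (gE (lo k) (hi k) (lo_lt_hi k)).symm (lo (skip k l)) = Sum.inr (lo l) := by
    rw [Equiv.symm_apply_eq, gE_inr, emb_pair_lo]
  simp [PhiK, Equiv.trans_apply, h0, gE_inr]

lemma PhiK_skip_hi {i j : Fin (2 * (m + 1))} (hij : i < j) (k : Fin (m + 1))
    (τ : Equiv.Perm (Fin (2 * m))) (l : Fin m) :
    PhiK i j hij k τ (hi (skip k l)) = emb i j (τ (hi l)) := by
  have h0 : (gE (lo k) (hi k) (lo_lt_hi k)).symm (hi (skip k l)) = Sum.inr (hi l) := by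
    rw [Equiv.symm_apply_eq, gE_inr, emb_pair_hi]
  simp [PhiK, Equiv.trans_apply, h0, gE_inr]

/-- membership criterion for initial-segment filters. -/
lemma lt_card_filter_iff {M : ℕ} (u : Fin M → Fin (2 * (m + 1))) (hu : StrictMono u)
    (i : Fin (2 * (m + 1))) (l : Fin M) :
    l.val < (Finset.univ.filter fun l' => u l' < i).card ↔ u l < i := by
  set S := Finset.univ.filter fun l' => u l' < i with hS
  constructor
  · intro h
    by_contra hc
    have hsub : S ⊆ Finset.Iio l := by
      intro b hb
      rw [Finset.mem_Iio]
      by_contra hbl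
      push_neg at hbl
      have : u l ≤ u b := hu.monotone hbl
      rw [hS, Finset.mem_filter] at hb
      exact hc (lt_of_le_of_lt this hb.2)
    have := Finset.card_le_card hsub
    rw [Fin.card_Iio] at this
    omega
  · intro h
    have hsub : Finset.Iic l ⊆ S := by
      intro b hb
      rw [Finset.mem_Iic] at hb
      rw [hS, Finset.mem_filter]
      exact ⟨Finset.mem_univ _, lt_of_le_of_lt (hu.monotone hb) h⟩
    have := Finset.card_le_card hsub
    rw [Fin.card_Iic] at this
    omega

lemma uMono {i j : Fin (2 * (m + 1))} (hij : i < j) {τ : Equiv.Perm (Fin (2 * m))}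
    (hτ : τ ∈ matchings m) : StrictMono (fun l => emb i j (τ (lo l))) := by
  intro l l' hll
  exact emb_strictMono hij ((mem_matchings_iff.1 hτ).2 l l' hll)

lemma lt_kOf_iff {i j : Fin (2 * (m + 1))} (hij : i < j) {τ : Equiv.Perm (Fin (2 * m))}
    (hτ : τ ∈ matchings m) (l : Fin m) :
    l.val < (kOf i j τ).val ↔ emb i j (τ (lo l)) < i :=
  lt_card_filter_iff _ (uMono hij hτ) i l

lemma Phi_mem {i j : Fin (2 * (m + 1))} (hij : i < j) {τ : Equiv.Perm (Fin (2 * m))}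
    (hτ : τ ∈ matchings m) : Phi i j hij τ ∈ matchings (m + 1) := by
  obtain ⟨hτ1, hτ2⟩ := mem_matchings_iff.1 hτ
  set k := kOf i j τ with hk
  rw [mem_matchings_iff]
  constructor
  · intro p
    by_cases hp : p = k
    · subst hp
      rw [Phi, ← hk, PhiK_lo, PhiK_hi]
      exact hij
    · obtain ⟨l, rfl⟩ := exists_skip hp
      rw [Phi, ← hk, PhiK_skip_lo, PhiK_skip_hi]
      exact emb_strictMono hij (hτ1 l)
  · intro p q hpq
    by_cases hp : p = k
    · subst hp
      have hq : q ≠ k := by exact fun h => absurd (h ▸ hpq) (lt_irrefl _)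
      obtain ⟨l, rfl⟩ := exists_skip hq
      rw [Phi, ← hk, PhiK_lo, PhiK_skip_lo]
      -- p = k < skip k l, so l.val ≥ k.val, so ¬ (u l < i), and u l ≠ i
      have hlk : ¬ (l.val < k.val) := by
        intro hc
        have : skip k l < k := (skip_lt_iff k l).2 hc
        exact absurd (lt_trans hpq this) (lt_irrefl _)
      have h1 : ¬ (emb i j (τ (lo l)) < i) := fun hc =>
        hlk ((lt_kOf_iff hij hτ l).2 hc)
      have h2 : emb i j (τ (lo l)) ≠ i := emb_ne_left hij _
      exact (not_lt.1 h1).lt_of_ne (Ne.symm h2)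
    · by_cases hq : q = k
      · subst hq
        obtain ⟨l, rfl⟩ := exists_skip hp
        rw [Phi, ← hk, PhiK_lo, PhiK_skip_lo]
        have hlk : l.val < k.val := by
          rw [← skip_lt_iff k l]; exact hpq
        exact (lt_kOf_iff hij hτ l).1 hlk
      · obtain ⟨l, rfl⟩ := exists_skip hp
        obtain ⟨l', rfl⟩ := exists_skip hq
        rw [Phi, ← hk, PhiK_skip_lo, PhiK_skip_lo]
        exact emb_strictMono hij (hτ2 l l' ((skip_lt_skip k l l').1 hpq))

lemma sign_PhiK {i j : Fin (2 * (m + 1))} (hij : i < j) (k : Fin (m + 1))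
    (τ : Equiv.Perm (Fin (2 * m))) :
    Equiv.Perm.sign (PhiK i j hij k τ) =
      (-1 : ℤˣ) ^ (i.val + j.val + 1) * Equiv.Perm.sign τ := by
  have hdecomp : PhiK i j hij k τ =
      (((gE (lo 0) (hi 0) (lo_lt_hi 0)).symm.trans (gE i j hij)) *
        (((gE (lo 0) (hi 0) (lo_lt_hi 0)).symm.trans (gE (lo k) (hi k) (lo_lt_hi k)))⁻¹) *
        (Equiv.permCongr (gE (lo k) (hi k) (lo_lt_hi k))
          (Equiv.sumCongr (Equiv.refl (Fin 2)) τ))) := by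
    apply Equiv.ext
    intro x
    simp [PhiK, Equiv.trans_apply, Equiv.Perm.mul_apply, Equiv.permCongr_apply,
      Equiv.Perm.inv_def, Equiv.symm_apply_apply, Equiv.symm_trans_apply]
  rw [hdecomp, _root_.map_mul, _root_.map_mul, map_inv, sign_W hij, sign_W_pair,
    Equiv.Perm.sign_permCongr, Equiv.Perm.sign_sumCongr]
  simp


lemma skip_injective (k : Fin (m + 1)) : Function.Injective (skip k) := by
  intro a b h
  have h' := congrArg Fin.val h
  simp only [skip] at h'
  apply Fin.ext
  split_ifs at h' <;> omega

lemma PhiK_apply_gE {i j : Fin (2 * (m + 1))} (hij : i < j) (k : Fin (m + 1))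
    (τ : Equiv.Perm (Fin (2 * m))) (z : Fin 2 ⊕ Fin (2 * m)) :
    PhiK i j hij k τ (gE (lo k) (hi k) (lo_lt_hi k) z) =
      gE i j hij ((Equiv.sumCongr (Equiv.refl (Fin 2)) τ) z) := by
  simp [PhiK, Equiv.trans_apply, Equiv.symm_apply_apply]

lemma lo_injective : Function.Injective (lo : Fin (m + 1) → Fin (2 * (m + 1))) := by
  intro a b h
  have h' := congrArg Fin.val h
  simp only [lo] at h'
  apply Fin.ext
  omega

lemma kOf_eq_of_PhiK {i j : Fin (2 * (m + 1))} (hij : i < j)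
    {τ τ' : Equiv.Perm (Fin (2 * m))} (h : Phi i j hij τ = Phi i j hij τ') :
    kOf i j τ = kOf i j τ' := by
  have h1 : Phi i j hij τ (lo (kOf i j τ)) = i := PhiK_lo hij _ τ
  have h2 : Phi i j hij τ (lo (kOf i j τ')) = i := by
    rw [h]; exact PhiK_lo hij _ τ'
  have := (Phi i j hij τ).injective (h1.trans h2.symm)
  exact lo_injective this

lemma Phi_injOn {i j : Fin (2 * (m + 1))} (hij : i < j)
    {τ τ' : Equiv.Perm (Fin (2 * m))} (h : Phi i j hij τ = Phi i j hij τ') :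
    τ = τ' := by
  have hk := kOf_eq_of_PhiK hij h
  apply Equiv.ext
  intro x
  have h1 := PhiK_apply_gE hij (kOf i j τ) τ (Sum.inr x)
  have h2 := PhiK_apply_gE hij (kOf i j τ') τ' (Sum.inr x)
  rw [← hk] at h2
  rw [show (Phi i j hij τ : Equiv.Perm _) = PhiK i j hij (kOf i j τ) τ from rfl] at h
  rw [show (Phi i j hij τ' : Equiv.Perm _) = PhiK i j hij (kOf i j τ') τ' from rfl, ← hk] at h
  rw [h] at h1
  have h3 := h1.symm.trans h2
  have h4 := (gE i j hij).injective h3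
  simpa using h4

lemma exists_preimage {i j : Fin (2 * (m + 1))} (hij : i < j)
    {σ : Equiv.Perm (Fin (2 * (m + 1)))} (hσ : σ ∈ matchings (m + 1))
    (k : Fin (m + 1)) (hk1 : σ (lo k) = i) (hk2 : σ (hi k) = j) :
    ∃ τ ∈ matchings m, Phi i j hij τ = σ := by
  obtain ⟨hσ1, hσ2⟩ := mem_matchings_iff.1 hσ
  set ρ : Fin (2 * m) → (Fin 2 ⊕ Fin (2 * m)) :=
    fun x => (gE i j hij).symm (σ (gE (lo k) (hi k) (lo_lt_hi k) (Sum.inr x))) with hρdef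
  set τfun : Fin (2 * m) → Fin (2 * m) := fun x => (ρ x).elim (fun _ => x) id with hτdef
  have hρ : ∀ x, ρ x = Sum.inr (τfun x) := by
    intro x
    rcases hx : ρ x with a | y
    · exfalso
      have : σ (gE (lo k) (hi k) (lo_lt_hi k) (Sum.inr x)) = gE i j hij (Sum.inl a) := by
        rw [← hx, hρdef, Equiv.apply_symm_apply]
      rcases a with ⟨av, ha⟩
      interval_cases av
      · have e0 : gE i j hij (Sum.inl ⟨0, ha⟩) = i := rfl
        rw [e0, ← hk1] at this
        have := σ.injective this
        have h2 : Sum.inr x = Sum.inl (0 : Fin 2) :=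
          (gE (lo k) (hi k) (lo_lt_hi k)).injective (by rw [this]; rfl)
        cases h2
      · have e1 : gE i j hij (Sum.inl ⟨1, ha⟩) = j := rfl
        rw [e1, ← hk2] at this
        have := σ.injective this
        have h2 : Sum.inr x = Sum.inl (1 : Fin 2) :=
          (gE (lo k) (hi k) (lo_lt_hi k)).injective (by rw [this]; rfl)
        cases h2
    · simp [hτdef, hx]
  have hkey : ∀ x, emb i j (τfun x) = σ (emb (lo k) (hi k) x) := by
    intro x
    have h1 : gE i j hij (ρ x) = σ (gE (lo k) (hi k) (lo_lt_hi k) (Sum.inr x)) := by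
      rw [hρdef, Equiv.apply_symm_apply]
    rw [hρ x, gE_inr] at h1
    rw [h1, gE_inr]
  have hinj : Function.Injective τfun := by
    intro x x' hxx
    have h1 := hkey x
    have h2 := hkey x'
    rw [hxx] at h1
    have h3 := h1.symm.trans h2
    have h4 := σ.injective h3
    exact (emb_strictMono (lo_lt_hi k)).injective h4
  obtain ⟨τp, hτp⟩ : ∃ τp : Equiv.Perm (Fin (2 * m)), ∀ x, τp x = τfun x :=
    ⟨Equiv.ofBijective τfun ((Finite.injective_iff_bijective).1 hinj), fun x => rfl⟩
  have hkey' : ∀ x, emb i j (τp x) = σ (emb (lo k) (hi k) x) := by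
    intro x; rw [hτp]; exact hkey x
  have hτmem : τp ∈ matchings m := by
    rw [mem_matchings_iff]
    constructor
    · intro l
      rw [← (emb_strictMono hij).lt_iff_lt, hkey', hkey', emb_pair_lo, emb_pair_hi]
      exact hσ1 (skip k l)
    · intro l l' hll
      rw [← (emb_strictMono hij).lt_iff_lt, hkey', hkey', emb_pair_lo, emb_pair_lo]
      exact hσ2 _ _ ((skip_lt_skip k l l').2 hll)
  have hσlo_lt : ∀ p : Fin (m + 1), σ (lo p) < i ↔ p < k := by
    intro p
    constructor
    · intro hp
      rcases lt_trichotomy p k with h | h | h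
      · exact h
      · subst h; rw [hk1] at hp; exact absurd hp (lt_irrefl _)
      · exact absurd (hk1 ▸ hσ2 k p h) (by exact fun hc => absurd (lt_trans hc hp) (lt_irrefl _))
    · intro hp
      have := hσ2 p k hp
      rwa [hk1] at this
  have hkOf : kOf i j τp = k := by
    apply Fin.ext
    show (Finset.univ.filter fun l : Fin m => emb i j (τp (lo l)) < i).card = k.val
    have hcard1 : (Finset.univ.filter fun l : Fin m => emb i j (τp (lo l)) < i).card =
        (Finset.univ.filter fun p : Fin (m + 1) => σ (lo p) < i).card := by
      apply Finset.card_bij (fun l _ => skip k l)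
      · intro l hl
        rw [Finset.mem_filter] at hl ⊢
        refine ⟨Finset.mem_univ _, ?_⟩
        rw [hkey' (lo l), emb_pair_lo] at hl
        exact hl.2
      · intro a _ b _ hab
        exact skip_injective k hab
      · intro p hp
        rw [Finset.mem_filter] at hp
        have hpk : p ≠ k := by
          intro hc; subst hc; rw [hk1] at hp; exact absurd hp.2 (lt_irrefl _)
        obtain ⟨l, rfl⟩ := exists_skip hpk
        refine ⟨l, ?_, rfl⟩
        rw [Finset.mem_filter]
        refine ⟨Finset.mem_univ _, ?_⟩
        rw [hkey' (lo l), emb_pair_lo]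
        exact hp.2
    have hcard2 : (Finset.univ.filter fun p : Fin (m + 1) => σ (lo p) < i) = Finset.Iio k := by
      ext p
      simp [Finset.mem_Iio, hσlo_lt p]
    rw [hcard1, hcard2, Fin.card_Iio]
  refine ⟨τp, hτmem, ?_⟩
  rw [Phi, hkOf]
  apply Equiv.ext
  intro y
  obtain ⟨z, rfl⟩ : ∃ z, gE (lo k) (hi k) (lo_lt_hi k) z = y :=
    ⟨_, (gE (lo k) (hi k) (lo_lt_hi k)).apply_symm_apply y⟩
  rw [PhiK_apply_gE]
  rcases z with a | x
  · rcases a with ⟨av, ha⟩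
    interval_cases av
    · have e0 : gE i j hij ((Equiv.sumCongr (Equiv.refl (Fin 2)) τp) (Sum.inl ⟨0, ha⟩)) = i := rfl
      have e0' : gE (lo k) (hi k) (lo_lt_hi k) (Sum.inl ⟨0, ha⟩) = lo k := rfl
      rw [e0, e0', hk1]
    · have e1 : gE i j hij ((Equiv.sumCongr (Equiv.refl (Fin 2)) τp) (Sum.inl ⟨1, ha⟩)) = j := rfl
      have e1' : gE (lo k) (hi k) (lo_lt_hi k) (Sum.inl ⟨1, ha⟩) = hi k := rfl
      rw [e1, e1', hk2]
  · have e2 : gE i j hij ((Equiv.sumCongr (Equiv.refl (Fin 2)) τp) (Sum.inr x)) =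
        emb i j (τp x) := rfl
    rw [e2, gE_inr, hkey']


lemma core {i j : Fin (2 * (m + 1))} (hij : i < j)
    (A : Matrix (Fin (2 * (m + 1))) (Fin (2 * (m + 1))) R) :
    (∑ σ ∈ matchings (m + 1), (Equiv.Perm.sign σ : ℤ) •
      ∑ k ∈ Finset.univ.filter (fun k => σ (lo k) = i ∧ σ (hi k) = j),
        ∏ l ∈ Finset.univ.erase k, A (σ (lo l)) (σ (hi l)))
    = (-1 : R) ^ (i.val + j.val + 1) * pf (minor A i j) := by
  have himg : (matchings m).image (Phi i j hij) ⊆ matchings (m + 1) := by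
    intro σ hσ
    rw [Finset.mem_image] at hσ
    obtain ⟨τ, hτ, rfl⟩ := hσ
    exact Phi_mem hij hτ
  have hvanish : ∀ σ ∈ matchings (m + 1), σ ∉ (matchings m).image (Phi i j hij) →
      ((Equiv.Perm.sign σ : ℤ) •
        ∑ k ∈ Finset.univ.filter (fun k => σ (lo k) = i ∧ σ (hi k) = j),
          ∏ l ∈ Finset.univ.erase k, A (σ (lo l)) (σ (hi l))) = 0 := by
    intro σ hσ hσn
    have hf : Finset.univ.filter (fun k => σ (lo k) = i ∧ σ (hi k) = j) = ∅ := by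
      rw [Finset.eq_empty_iff_forall_notMem]
      intro k hk
      rw [Finset.mem_filter] at hk
      obtain ⟨τ, hτ, hτeq⟩ := exists_preimage hij hσ k hk.2.1 hk.2.2
      exact hσn (Finset.mem_image.2 ⟨τ, hτ, hτeq⟩)
    rw [hf, Finset.sum_empty, smul_zero]
  rw [← Finset.sum_subset himg hvanish,
    Finset.sum_image (fun x _ y _ h => Phi_injOn hij h)]
  rw [pf, Finset.mul_sum]
  apply Finset.sum_congr rfl
  intro τ hτ
  have hfilter : Finset.univ.filter
      (fun k => Phi i j hij τ (lo k) = i ∧ Phi i j hij τ (hi k) = j) = {kOf i j τ} := by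
    ext k
    simp only [Finset.mem_filter, Finset.mem_univ, true_and, Finset.mem_singleton]
    constructor
    · rintro ⟨h1, _⟩
      have h2 : Phi i j hij τ (lo (kOf i j τ)) = i := PhiK_lo hij _ τ
      exact lo_injective ((Phi i j hij τ).injective (h1.trans h2.symm))
    · rintro rfl
      exact ⟨PhiK_lo hij _ τ, PhiK_hi hij _ τ⟩
  rw [hfilter, Finset.sum_singleton]
  have hprod : (∏ l' : Fin m, minor A i j (τ (lo l')) (τ (hi l')))
      = ∏ l ∈ Finset.univ.erase (kOf i j τ),
          A (Phi i j hij τ (lo l)) (Phi i j hij τ (hi l)) := by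
    apply Finset.prod_bij (fun l' _ => skip (kOf i j τ) l')
    · intro a _
      exact Finset.mem_erase.2 ⟨skip_ne _ a, Finset.mem_univ _⟩
    · intro a _ b _ h
      exact skip_injective _ h
    · intro b hb
      obtain ⟨l, rfl⟩ := exists_skip (Finset.mem_erase.1 hb).1
      exact ⟨l, Finset.mem_univ _, rfl⟩
    · intro a _
      rw [minor_eq_submatrix hij, Matrix.submatrix_apply]
      rw [show Phi i j hij τ (lo (skip (kOf i j τ) a)) = emb i j (τ (lo a)) from
          PhiK_skip_lo hij _ τ a,
        show Phi i j hij τ (hi (skip (kOf i j τ) a)) = emb i j (τ (hi a)) from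
          PhiK_skip_hi hij _ τ a]
  have hsign : (Equiv.Perm.sign (Phi i j hij τ) : ℤ) =
      ((-1 : ℤ) ^ (i.val + j.val + 1)) * (Equiv.Perm.sign τ : ℤ) := by
    have h := sign_PhiK hij (kOf i j τ) τ
    rw [show (Phi i j hij τ : Equiv.Perm _) = PhiK i j hij (kOf i j τ) τ from rfl]
    have h2 := congrArg Units.val h
    push_cast at h2
    exact h2
  rw [← hprod, hsign, mul_smul, zsmul_eq_mul]
  push_cast
  ring


/-! ### derivative of a finset product -/

lemma derivative_finset_prod {ι : Type*} [DecidableEq ι] (s : Finset ι)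
    (f : ι → Polynomial R) :
    Polynomial.derivative (∏ i ∈ s, f i) =
      ∑ i ∈ s, (∏ j ∈ s.erase i, f j) * Polynomial.derivative (f i) := by
  induction s using Finset.induction_on with
  | empty => simp
  | @insert a s ha ih =>
    rw [Finset.prod_insert ha, derivative_mul, ih, Finset.sum_insert ha,
      Finset.erase_insert ha]
    have hcong : ∀ i ∈ s, (∏ j ∈ (insert a s).erase i, f j) * Polynomial.derivative (f i)
        = f a * ((∏ j ∈ s.erase i, f j) * Polynomial.derivative (f i)) := by
      intro i hi
      rw [Finset.erase_insert_of_ne (fun h : a = i => ha (by rw [h]; exact hi)),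
        Finset.prod_insert (fun hc => ha (Finset.mem_of_mem_erase hc)), mul_assoc]
    rw [Finset.sum_congr rfl hcong, ← Finset.mul_sum]
    ring

/-! ### symmetry lemmas for `Padj` -/

lemma delEmb_swap_eq_emb {i j : Fin (2 * (m + 1))} (hij : i < j) (h : j ≠ i) :
    delEmb j i h = emb i j := by
  funext x
  have hmem : ∀ y, emb i j y ∈ ({j, i}ᶜ : Finset (Fin (2 * (m + 1)))) := by
    intro y
    rw [Finset.pair_comm]
    exact emb_mem_compl hij y
  have := Finset.orderEmbOfFin_unique (card_compl_pair (by simpa using h))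
    (f := emb i j) hmem (emb_strictMono hij)
  have h2 : delEmb j i h x = ({j, i}ᶜ : Finset (Fin (2 * (m + 1)))).orderEmbOfFin
      (card_compl_pair (by simpa using h)) x := by
    rw [delEmb, ← Finset.coe_orderIsoOfFin_apply]
  rw [h2, this]

lemma minor_swap {i j : Fin (2 * (m + 1))} (hij : i < j)
    (A : Matrix (Fin (2 * (m + 1))) (Fin (2 * (m + 1))) R) :
    minor A j i = minor A i j := by
  rw [minor_eq_submatrix hij, minor,
    dif_neg (show ¬ j = i from fun h => absurd h (Fin.ne_of_gt hij)),
    delEmb_swap_eq_emb hij]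

lemma Padj_swap {i j : Fin (2 * (m + 1))} (hij : i < j)
    (A : Matrix (Fin (2 * (m + 1))) (Fin (2 * (m + 1))) R) :
    Padj A j i = (-1 : R) ^ (i.val + j.val + 1) * pf (minor A i j) := by
  rw [Padj]
  rw [if_neg (show ¬ j = i from fun h => absurd h (Fin.ne_of_gt hij)),
    if_neg (show ¬ j < i from fun h => absurd (lt_trans h hij) (lt_irrefl _)),
    minor_swap hij]
  congr 2
  omega

lemma Padj_diag (A : Matrix (Fin (2 * (m + 1))) (Fin (2 * (m + 1))) R)
    (i : Fin (2 * (m + 1))) : Padj A i i = 0 := by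
  rw [Padj, if_pos rfl]

lemma Padj_upper {i j : Fin (2 * (m + 1))} (hij : i < j)
    (A : Matrix (Fin (2 * (m + 1))) (Fin (2 * (m + 1))) R) :
    Padj A i j = - Padj A j i := by
  rw [Padj_swap hij, Padj, if_neg (Fin.ne_of_lt hij), if_pos hij, pow_succ]
  ring

end PaperPf

/-- Jacobi's formula for the Pfaffian: for a skew-symmetric
matrix `A(t)` with polynomial entries over a commutative `ℚ`-algebra,
`d/dt pf(A(t)) = (1/2)·tr(A'(t) · Padj(A(t)))`, with formal derivatives. -/
theorem derivative_pf {R : Type*} [CommRing R] [Algebra ℚ R] {m : ℕ}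
    (A : Matrix (Fin (2 * (m + 1))) (Fin (2 * (m + 1))) (Polynomial R))
    (hA : Aᵀ = -A) :
    Polynomial.derivative (pf A)
      = (2 : ℚ)⁻¹ • ((A.map (fun p => Polynomial.derivative p)) * Padj A).trace := by
  classical
  have hAa : ∀ i j, A j i = - A i j := by
    intro i j
    have := congrFun (congrFun hA i) j
    simpa [Matrix.transpose_apply] using this
  set Pairs : Finset (Fin (2 * (m + 1)) × Fin (2 * (m + 1))) :=
    Finset.univ.filter (fun p => p.1 < p.2) with hPairs
  -- LHS expansion
  have hLHS : Polynomial.derivative (pf A) =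
      ∑ p ∈ Pairs,
        ((-1 : Polynomial R) ^ (p.1.val + p.2.val + 1) * pf (minor A p.1 p.2)) *
          Polynomial.derivative (A p.1 p.2) := by
    rw [pf, map_sum]
    have h1 : ∀ σ ∈ matchings (m + 1),
        Polynomial.derivative ((Equiv.Perm.sign σ : ℤ) •
            ∏ l : Fin (m + 1), A (σ (lo l)) (σ (hi l)))
          = (Equiv.Perm.sign σ : ℤ) • ∑ k : Fin (m + 1),
              (∏ l ∈ Finset.univ.erase k, A (σ (lo l)) (σ (hi l))) *
                Polynomial.derivative (A (σ (lo k)) (σ (hi k))) := by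
      intro σ _
      rw [map_zsmul, derivative_finset_prod]
    rw [Finset.sum_congr rfl h1]
    have h2 : ∀ σ ∈ matchings (m + 1),
        (∑ k : Fin (m + 1),
          (∏ l ∈ Finset.univ.erase k, A (σ (lo l)) (σ (hi l))) *
            Polynomial.derivative (A (σ (lo k)) (σ (hi k))))
        = ∑ p ∈ Pairs, ∑ k ∈ Finset.univ.filter
              (fun k => σ (lo k) = p.1 ∧ σ (hi k) = p.2),
            (∏ l ∈ Finset.univ.erase k, A (σ (lo l)) (σ (hi l))) *
              Polynomial.derivative (A p.1 p.2) := by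
      intro σ hσ
      have hper : ∀ k : Fin (m + 1),
          (∏ l ∈ Finset.univ.erase k, A (σ (lo l)) (σ (hi l))) *
            Polynomial.derivative (A (σ (lo k)) (σ (hi k)))
          = ∑ p ∈ Pairs, if σ (lo k) = p.1 ∧ σ (hi k) = p.2 then
              (∏ l ∈ Finset.univ.erase k, A (σ (lo l)) (σ (hi l))) *
                Polynomial.derivative (A p.1 p.2) else 0 := by
        intro k
        rw [Finset.sum_eq_single_of_mem (σ (lo k), σ (hi k))]
        · rw [if_pos ⟨rfl, rfl⟩]
        · rw [hPairs, Finset.mem_filter]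
          exact ⟨Finset.mem_univ _, (mem_matchings_iff.1 hσ).1 k⟩
        · intro p _ hne
          rw [if_neg]
          rintro ⟨hp1, hp2⟩
          exact hne (Prod.ext hp1.symm hp2.symm)
      rw [Finset.sum_congr rfl (fun k _ => hper k), Finset.sum_comm]
      apply Finset.sum_congr rfl
      intro p _
      exact (Finset.sum_filter _ _).symm
    rw [Finset.sum_congr rfl (fun σ hσ => by rw [h2 σ hσ, Finset.smul_sum])]
    rw [Finset.sum_comm]
    apply Finset.sum_congr rfl
    intro p hp
    have hplt : p.1 < p.2 := by
      rw [hPairs, Finset.mem_filter] at hp; exact hp.2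
    have hstep : ∀ σ ∈ matchings (m + 1),
        ((Equiv.Perm.sign σ : ℤ) • ∑ k ∈ Finset.univ.filter
            (fun k => σ (lo k) = p.1 ∧ σ (hi k) = p.2),
          (∏ l ∈ Finset.univ.erase k, A (σ (lo l)) (σ (hi l))) *
            Polynomial.derivative (A p.1 p.2))
        = ((Equiv.Perm.sign σ : ℤ) • ∑ k ∈ Finset.univ.filter
            (fun k => σ (lo k) = p.1 ∧ σ (hi k) = p.2),
          (∏ l ∈ Finset.univ.erase k, A (σ (lo l)) (σ (hi l)))) *
            Polynomial.derivative (A p.1 p.2) := by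
      intro σ _
      rw [← Finset.sum_mul, smul_mul_assoc]
    rw [Finset.sum_congr rfl hstep, ← Finset.sum_mul, core hplt A]
  -- RHS : trace computation
  set T : Fin (2 * (m + 1)) × Fin (2 * (m + 1)) → Polynomial R :=
    fun p => Polynomial.derivative (A p.1 p.2) * Padj A p.2 p.1 with hT
  have htr : ((A.map (fun p => Polynomial.derivative p)) * Padj A).trace
      = ∑ p : Fin (2 * (m + 1)) × Fin (2 * (m + 1)), T p := by
    rw [Matrix.trace, Fintype.sum_prod_type]
    apply Finset.sum_congr rfl
    intro i _
    rw [Matrix.diag]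
    rw [Matrix.mul_apply]
    apply Finset.sum_congr rfl
    intro j _
    rw [Matrix.map_apply, hT]
  have hsplit : (∑ p : Fin (2 * (m + 1)) × Fin (2 * (m + 1)), T p)
      = (∑ p ∈ Pairs, T p) +
        ∑ p ∈ Finset.univ.filter (fun p : Fin (2 * (m + 1)) × Fin (2 * (m + 1)) =>
          ¬ p.1 < p.2), T p := by
    rw [hPairs]
    exact (Finset.sum_filter_add_sum_filter_not Finset.univ _ T).symm
  have hsplit2 : (∑ p ∈ Finset.univ.filter
        (fun p : Fin (2 * (m + 1)) × Fin (2 * (m + 1)) => ¬ p.1 < p.2), T p)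
      = ∑ p ∈ (Finset.univ.filter (fun p : Fin (2 * (m + 1)) × Fin (2 * (m + 1)) =>
          ¬ p.1 < p.2)).filter (fun p => p.2 < p.1), T p := by
    rw [← Finset.sum_filter_add_sum_filter_not (Finset.univ.filter
      (fun p : Fin (2 * (m + 1)) × Fin (2 * (m + 1)) => ¬ p.1 < p.2))
      (fun p => p.2 < p.1) T]
    have hz : (∑ p ∈ (Finset.univ.filter (fun p : Fin (2 * (m + 1)) × Fin (2 * (m + 1)) =>
        ¬ p.1 < p.2)).filter (fun p => ¬ p.2 < p.1), T p) = 0 := by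
      apply Finset.sum_eq_zero
      intro p hp
      simp only [Finset.mem_filter] at hp
      have heq : p.2 = p.1 := le_antisymm (not_lt.1 hp.1.2) (not_lt.1 hp.2)
      rw [hT]
      simp only
      rw [heq, Padj_diag, mul_zero]
    rw [hz, add_zero]
  have hswap : (∑ p ∈ (Finset.univ.filter (fun p : Fin (2 * (m + 1)) × Fin (2 * (m + 1)) =>
        ¬ p.1 < p.2)).filter (fun p => p.2 < p.1), T p) = ∑ p ∈ Pairs, T p := by
    apply Finset.sum_bij' (fun p _ => Prod.swap p) (fun p _ => Prod.swap p)
    · intro a ha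
      simp only [Finset.mem_filter] at ha ⊢
      rw [hPairs, Finset.mem_filter]
      exact ⟨Finset.mem_univ _, ha.2⟩
    · intro a ha
      rw [hPairs, Finset.mem_filter] at ha
      simp only [Finset.mem_filter]
      exact ⟨⟨Finset.mem_univ _, not_lt.2 (le_of_lt ha.2)⟩, ha.2⟩
    · intro a _; exact Prod.swap_swap a
    · intro a _; exact Prod.swap_swap a
    · intro p hp
      simp only [Finset.mem_filter] at hp
      have h21 : p.2 < p.1 := hp.2
      rw [hT]
      simp only [Prod.fst_swap, Prod.snd_swap]
      rw [hAa p.2 p.1, Padj_upper h21, map_neg]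
      ring
  rw [hLHS, htr, hsplit, hsplit2, hswap]
  have h2S : (∑ p ∈ Pairs, T p) + (∑ p ∈ Pairs, T p) = (2 : ℚ) • ∑ p ∈ Pairs, T p :=
    (two_smul ℚ _).symm
  rw [h2S, smul_smul]
  norm_num
  apply Finset.sum_congr rfl
  intro p hp
  have hplt : p.1 < p.2 := by rw [hPairs, Finset.mem_filter] at hp; exact hp.2
  rw [hT]
  simp only
  rw [Padj_swap hplt]
  ring
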